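/- arXiv:2004.12541 — 2 statements merged into one kernel-verified Lean document; each statement's English description precedes it below -/
import Mathlib

section
/- Let δ, μ, ε > 0, a = εβ₁f₁(S₀)g₁'(0) ≥ 0, b = β₂f₂(S₀)g₂'(0) ≥ 0, and define R₀ = a/((μ+ε)(μ+δ)) + b/(μ+ε). Let s₅, s₆ be the two (real) roots of H₁(s) = s² + (δ+2μ+ε−b)s + (μ+δ)(μ+ε)(1−R₀). If R₀ < 1, then s₅ < 0 and s₆ < 0. -/
theorem stmt_6 (δ μ ε a b : ℝ)
    (hδ : 0 < δ) (hμ : 0 < μ) (hε : 0 < ε) (ha : 0 ≤ a) (hb : 0 ≤ b)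
    (R₀ : ℝ) (hR₀ : R₀ = a / ((μ + ε) * (μ + δ)) + b / (μ + ε))
    (s₅ s₆ : ℝ)
    (hroots : ∀ s : ℝ,
      s ^ 2 + (δ + 2 * μ + ε - b) * s + (μ + δ) * (μ + ε) * (1 - R₀)
        = (s - s₅) * (s - s₆))
    (hR : R₀ < 1) :
    s₅ < 0 ∧ s₆ < 0 := by
  have hμε : 0 < μ + ε := by linarith
  have hμδ : 0 < μ + δ := by linarith
  -- Vieta
  have h0 := hroots 0
  have h1 := hroots 1
  have hm1 := hroots (-1)
  have hprod : s₅ * s₆ = (μ + δ) * (μ + ε) * (1 - R₀) := by nlinarith [h0]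
  have hsum : s₅ + s₆ = b - (δ + 2 * μ + ε) := by nlinarith [h1, hm1]
  -- b < μ + ε
  have hblt : b < μ + ε := by
    have h1 : a / ((μ + ε) * (μ + δ)) ≥ 0 := by positivity
    have h2 : b / (μ + ε) < 1 := by linarith [hR₀ ▸ hR]
    calc b = b / (μ + ε) * (μ + ε) := by field_simp
    _ < 1 * (μ + ε) := by exact mul_lt_mul_of_pos_right h2 hμε
    _ = μ + ε := one_mul _
  have hprodpos : 0 < s₅ * s₆ := by
    rw [hprod]; have : 0 < 1 - R₀ := by linarith
    positivity
  have hsumneg : s₅ + s₆ < 0 := by linarith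
  constructor <;> nlinarith [hprodpos, hsumneg, sq_nonneg s₅, sq_nonneg s₆]
end

section
/- Let s₄, m, n ∈ ℝ with n ≠ 0, and set a₁ = −s₄ − 2m, a₂ = 2s₄m + m² + n², a₃ = −s₄(m² + n²). If a₁ > 0, a₂ > 0, a₃ > 0, and m > 0, then n² > 3m², i.e. the complex roots m ± ni satisfy |arg(m ± ni)| > π/3. -/
lemma arg_abs_gt_aux (z : ℂ) (hz : z ≠ 0) (h : z.re / ‖z‖ < 1 / 2) :
    |Complex.arg z| > Real.pi / 3 := by
  by_contra h'
  push_neg at h'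
  have h1 : Real.cos (Real.pi / 3) ≤ Real.cos |Complex.arg z| :=
    Real.cos_le_cos_of_nonneg_of_le_pi (abs_nonneg _)
      (by linarith [Real.pi_pos]) h'
  rw [Real.cos_abs, Complex.cos_arg hz, Real.cos_pi_div_three] at h1
  linarith

theorem stmt_10 (s₄ m n a₁ a₂ a₃ : ℝ) (hn : n ≠ 0)
    (ha₁ : a₁ = -s₄ - 2 * m) (ha₂ : a₂ = 2 * s₄ * m + m ^ 2 + n ^ 2)
    (ha₃ : a₃ = -s₄ * (m ^ 2 + n ^ 2))
    (ha₁pos : 0 < a₁) (ha₂pos : 0 < a₂) (ha₃pos : 0 < a₃) (hm : 0 < m) :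
    n ^ 2 > 3 * m ^ 2 ∧
      |Complex.arg ((m : ℂ) + (n : ℂ) * Complex.I)| > Real.pi / 3 ∧
      |Complex.arg ((m : ℂ) - (n : ℂ) * Complex.I)| > Real.pi / 3 := by
  have key : n ^ 2 > 3 * m ^ 2 := by nlinarith [mul_pos ha₁pos hm]
  have habs : Real.sqrt ((2 * m) ^ 2) < Real.sqrt (m ^ 2 + n ^ 2) :=
    Real.sqrt_lt_sqrt (by positivity) (by nlinarith)
  rw [Real.sqrt_sq (by positivity)] at habs
  have hsq : 0 < Real.sqrt (m ^ 2 + n ^ 2) := by positivity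
  refine ⟨key, ?_, ?_⟩
  · apply arg_abs_gt_aux
    · intro h
      have := congrArg Complex.re h
      simp at this
      linarith
    · rw [show ((m : ℂ) + (n : ℂ) * Complex.I).re = m by simp,
        Complex.norm_add_mul_I]
      rw [div_lt_iff₀ hsq]
      linarith
  · apply arg_abs_gt_aux
    · intro h
      have := congrArg Complex.re h
      simp at this
      linarith
    · rw [sub_eq_add_neg, show -((n:ℂ) * Complex.I) = ((-n : ℝ):ℂ) * Complex.I by push_cast; ring,
        show ((m : ℂ) + ((-n : ℝ):ℂ) * Complex.I).re = m by simp,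
        Complex.norm_add_mul_I, neg_sq]
      rw [div_lt_iff₀ hsq]
      linarith
end
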